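/- In a triangulation of the root polytope Q_G of a connected bipartite graph G into simplices corresponding to spanning trees, two maximal simplices σ_T and σ_{T'} (for spanning trees T, T') intersect in a common face if and only if the simplex spanned by the common edges T ∩ T' is a face of each; in particular, their intersection is conv{𝐞 + 𝐯 : ev ∈ T ∩ T'} when T and T' are compatible. -/

import Mathlib

open scoped Classical

/-- The bipartite graph on vertex set `E ⊕ V` determined by a set of edges
`edges ⊆ E × V` (each pair `(e, v)` is an edge `ev`). -/
def biGraph {E V : Type} (edges : Set (E × V)) : SimpleGraph (E ⊕ V) :=
  SimpleGraph.fromRel (fun a b => ∃ p ∈ edges, a = Sum.inl p.1 ∧ b = Sum.inr p.2)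

/-- The point `𝐞 + 𝐯` of `ℝ^E ⊕ ℝ^V` corresponding to an edge `ev`. -/
noncomputable def rootPt (E V : Type) (p : E × V) : (E → ℝ) × (V → ℝ) :=
  (Pi.single p.1 1, Pi.single p.2 1)

/-- The root polytope of the bipartite graph with edge set `edges`. -/
noncomputable def rootPolytope {E V : Type} (edges : Set (E × V)) :
    Set ((E → ℝ) × (V → ℝ)) :=
  convexHull ℝ (rootPt E V '' edges)

section Face

variable {W : Type*} [AddCommGroup W] [Module ℝ W]

/-- A linear functional bounded above by `c` on `s` carves out an extreme
subset (the "face" `{ℓ = c}`) of the convex hull of `s`. -/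
theorem face_extreme (s : Set W) (ℓ : W →ₗ[ℝ] ℝ) (c : ℝ) (hs : ∀ z ∈ s, ℓ z ≤ c) :
    IsExtreme ℝ (convexHull ℝ s) {x ∈ convexHull ℝ s | ℓ x = c} := by
  have hle : ∀ x ∈ convexHull ℝ s, ℓ x ≤ c := fun x hx =>
    convexHull_min hs (convex_halfSpace_le ℓ.isLinear c) hx
  constructor
  · exact fun x hx => hx.1
  · rintro x1 hx1 x2 hx2 x ⟨hxh, hxc⟩ ⟨a, b, ha, hb, hab, hx⟩
    have h1 := hle x1 hx1
    have h2 := hle x2 hx2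
    have hsum : a * ℓ x1 + b * ℓ x2 = c := by
      rw [← hxc, ← hx, map_add, map_smul, map_smul, smul_eq_mul, smul_eq_mul]
    have e1 : ℓ x1 = c := by
      by_contra hne
      have hlt : ℓ x1 < c := lt_of_le_of_ne h1 hne
      have hc : a * c + b * c = c := by rw [← add_mul, hab, one_mul]
      nlinarith [mul_lt_mul_of_pos_left hlt ha, mul_le_mul_of_nonneg_left h2 hb.le]
    have e2 : ℓ x2 = c := by
      by_contra hne
      have hlt : ℓ x2 < c := lt_of_le_of_ne h2 hne
      have hc : a * c + b * c = c := by rw [← add_mul, hab, one_mul]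
      nlinarith [mul_le_mul_of_nonneg_left h1 ha.le, mul_lt_mul_of_pos_left hlt hb]
    exact ⟨hx1, e1⟩

/-- A point of the convex hull of `s` where a functional bounded by `c` on `s`
attains the value `c` lies in the hull of the points of `s` where `ℓ = c`. -/
theorem face_eq (s : Set W) (ℓ : W →ₗ[ℝ] ℝ) (c : ℝ) (hs : ∀ z ∈ s, ℓ z ≤ c)
    (x : W) (hx : x ∈ convexHull ℝ s) (hxc : ℓ x = c) :
    x ∈ convexHull ℝ (s ∩ {z | ℓ z = c}) := by
  rw [convexHull_eq] at hx
  obtain ⟨ι, t, w, z, hw0, hw1, hzs, hcm⟩ := hx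
  rw [Finset.centerMass_eq_of_sum_1 _ _ hw1] at hcm
  have hsum : ∑ i ∈ t, w i * ℓ (z i) = c := by
    rw [← hxc, ← hcm, map_sum]
    simp [smul_eq_mul]
  have hkey : ∀ i ∈ t, w i ≠ 0 → ℓ (z i) = c := by
    by_contra h
    push_neg at h
    obtain ⟨i0, hi0, hwi0, hne⟩ := h
    have hw : 0 < w i0 := lt_of_le_of_ne (hw0 _ hi0) (Ne.symm hwi0)
    have hlt : w i0 * ℓ (z i0) < w i0 * c :=
      mul_lt_mul_of_pos_left (lt_of_le_of_ne (hs _ (hzs i0 hi0)) hne) hw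
    have hstrict : ∑ i ∈ t, w i * ℓ (z i) < ∑ i ∈ t, w i * c :=
      Finset.sum_lt_sum
        (fun i hi => mul_le_mul_of_nonneg_left (hs _ (hzs i hi)) (hw0 i hi))
        ⟨i0, hi0, hlt⟩
    rw [hsum, ← Finset.sum_mul, hw1, one_mul] at hstrict
    exact lt_irrefl _ hstrict
  have hw1' : ∑ i ∈ t.filter (fun i => w i ≠ 0), w i = 1 := by
    rw [Finset.sum_filter_ne_zero]; exact hw1
  have hx' : (t.filter (fun i => w i ≠ 0)).centerMass w z = x := by
    rw [Finset.centerMass_eq_of_sum_1 _ _ hw1', ← hcm]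
    exact Finset.sum_filter_of_ne (fun i _ h hw => h (by rw [hw, zero_smul]))
  rw [← hx']
  apply Finset.centerMass_mem_convexHull
  · exact fun i hi => hw0 i (Finset.mem_filter.mp hi).1
  · rw [hw1']; norm_num
  · intro i hi
    obtain ⟨hit, hwn⟩ := Finset.mem_filter.mp hi
    exact ⟨hzs i hit, hkey i hit hwn⟩

end Face

section RootPt

variable {E V : Type} [Fintype E] [Fintype V]

/-- Evaluation of the `E`-component at `a`, as a linear map. -/
noncomputable def evalE (E V : Type) (a : E) : ((E → ℝ) × (V → ℝ)) →ₗ[ℝ] ℝ :=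
  (LinearMap.proj a).comp (LinearMap.fst ℝ (E → ℝ) (V → ℝ))

/-- Evaluation of the `V`-component at `b`, as a linear map. -/
noncomputable def evalV (E V : Type) (b : V) : ((E → ℝ) × (V → ℝ)) →ₗ[ℝ] ℝ :=
  (LinearMap.proj b).comp (LinearMap.snd ℝ (E → ℝ) (V → ℝ))

lemma evalE_rootPt (a : E) (p : E × V) :
    evalE E V a (rootPt E V p) = if a = p.1 then 1 else 0 := by
  simp [evalE, rootPt, Pi.single_apply]

lemma evalV_rootPt (b : V) (p : E × V) :
    evalV E V b (rootPt E V p) = if b = p.2 then 1 else 0 := by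
  simp [evalV, rootPt, Pi.single_apply]

lemma sumE_rootPt (s : Finset E) (p : E × V) :
    (∑ a ∈ s, evalE E V a) (rootPt E V p) = if p.1 ∈ s then (1 : ℝ) else 0 := by
  rw [LinearMap.sum_apply]
  simp only [evalE_rootPt]
  rw [Finset.sum_ite_eq' s p.1 (fun _ => (1 : ℝ))]

lemma sumV_rootPt (s : Finset V) (p : E × V) :
    (∑ b ∈ s, evalV E V b) (rootPt E V p) = if p.2 ∈ s then (1 : ℝ) else 0 := by
  rw [LinearMap.sum_apply]
  simp only [evalV_rootPt]
  rw [Finset.sum_ite_eq' s p.2 (fun _ => (1 : ℝ))]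

/-- A point `rootPt p` can lie in the hull of the points of `S` only if `p ∈ S`. -/
lemma rootPt_mem_hull {S : Set (E × V)} {p : E × V}
    (h : rootPt E V p ∈ convexHull ℝ (rootPt E V '' S)) : p ∈ S := by
  set ℓ : ((E → ℝ) × (V → ℝ)) →ₗ[ℝ] ℝ := evalE E V p.1 + evalV E V p.2 with hℓ
  have hval : ∀ q : E × V,
      ℓ (rootPt E V q) = (if p.1 = q.1 then (1:ℝ) else 0) + (if p.2 = q.2 then 1 else 0) := by
    intro q
    rw [hℓ, LinearMap.add_apply, evalE_rootPt, evalV_rootPt]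
  have hs : ∀ z ∈ rootPt E V '' S, ℓ z ≤ 2 := by
    rintro z ⟨q, hq, rfl⟩
    rw [hval]
    split_ifs <;> norm_num
  have h2 : ℓ (rootPt E V p) = 2 := by rw [hval]; norm_num
  have hmem := face_eq _ ℓ 2 hs _ h h2
  have hne : (rootPt E V '' S ∩ {z | ℓ z = 2}).Nonempty := by
    by_contra hcon
    rw [Set.not_nonempty_iff_eq_empty] at hcon
    rw [hcon, convexHull_empty] at hmem
    exact hmem
  obtain ⟨z, ⟨q, hq, rfl⟩, hz2⟩ := hne
  have hz2' : ℓ (rootPt E V q) = 2 := hz2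
  rw [hval] at hz2'
  have hpq : p = q := by
    split_ifs at hz2' with h1 h2'
    · exact Prod.ext h1 h2'
    all_goals norm_num at hz2'
  rwa [hpq]

lemma biGraph_adj_inl_inr (S : Set (E × V)) (a : E) (b : V) :
    (biGraph S).Adj (Sum.inl a) (Sum.inr b) ↔ (a, b) ∈ S := by
  rw [biGraph, SimpleGraph.fromRel_adj]
  constructor
  · rintro ⟨-, (⟨p, hp, h1, h2⟩ | ⟨p, hp, h1, h2⟩)⟩
    · obtain rfl : a = p.1 := Sum.inl.inj h1
      obtain rfl : b = p.2 := Sum.inr.inj h2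
      exact hp
    · exact absurd h1 (by simp)
  · intro h
    exact ⟨by simp, Or.inl ⟨(a, b), h, rfl, rfl⟩⟩

/-- Deleting a pair from the edge set is (at most) deleting the corresponding edge. -/
lemma biGraph_diff_le (S : Set (E × V)) (q : E × V) :
    biGraph (S \ {q}) ≤
      biGraph S \ SimpleGraph.fromEdgeSet {s(Sum.inl q.1, Sum.inr q.2)} := by
  rintro u v ⟨hne, h⟩
  have key : ∀ p : E × V, p ∈ S \ {q} →
      ((biGraph S \ SimpleGraph.fromEdgeSet {s(Sum.inl q.1, Sum.inr q.2)}).Adj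
        (Sum.inl p.1 : E ⊕ V) (Sum.inr p.2)) := by
    intro p hp
    rw [SimpleGraph.sdiff_adj]
    constructor
    · exact (biGraph_adj_inl_inr S p.1 p.2).mpr hp.1
    · rw [SimpleGraph.fromEdgeSet_adj]
      rintro ⟨he, -⟩
      rw [Set.mem_singleton_iff, Sym2.eq_iff] at he
      rcases he with ⟨h1, h2⟩ | ⟨h1, h2⟩
      · exact hp.2 (Prod.ext (Sum.inl.inj h1) (Sum.inr.inj h2))
      · exact absurd h1 (by simp)
  rcases h with ⟨p, hp, rfl, rfl⟩ | ⟨p, hp, rfl, rfl⟩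
  · exact key p hp
  · exact (key p hp).symm

lemma not_reachable_of_acyclic {T : Set (E × V)} (hac : (biGraph T).IsAcyclic)
    {q : E × V} (hq : q ∈ T) :
    ¬ (biGraph (T \ {q})).Reachable (Sum.inl q.1) (Sum.inr q.2) := by
  intro hreach
  have hadj : (biGraph T).Adj (Sum.inl q.1) (Sum.inr q.2) :=
    (biGraph_adj_inl_inr T q.1 q.2).mpr hq
  have hbridge := (SimpleGraph.isAcyclic_iff_forall_edge_isBridge.mp hac)
    ((SimpleGraph.mem_edgeSet (biGraph T)).mpr hadj)
  rw [SimpleGraph.isBridge_iff] at hbridge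
  exact hbridge (hreach.mono (biGraph_diff_le T q))

/-- The convex hull of a subset of the points of a spanning tree is an extreme
subset of the simplex of the tree. -/
lemma extreme_hull_subset (T A : Set (E × V)) (hA : A ⊆ T)
    (hac : (biGraph T).IsAcyclic) :
    IsExtreme ℝ (convexHull ℝ (rootPt E V '' T)) (convexHull ℝ (rootPt E V '' A)) := by
  set D : Finset (E × V) := (Set.toFinite (T \ A)).toFinset with hD
  set ℓ : ((E → ℝ) × (V → ℝ)) →ₗ[ℝ] ℝ :=
    ∑ q ∈ D,
      ((∑ a ∈ Finset.univ.filter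
          (fun a => (biGraph (T \ {q})).Reachable (Sum.inr q.2) (Sum.inl a)), evalE E V a)
        - ∑ b ∈ Finset.univ.filter
          (fun b => (biGraph (T \ {q})).Reachable (Sum.inr q.2) (Sum.inr b)), evalV E V b)
    with hℓ
  have hterm : ∀ q ∈ D, ∀ p ∈ T,
      ((∑ a ∈ Finset.univ.filter
          (fun a => (biGraph (T \ {q})).Reachable (Sum.inr q.2) (Sum.inl a)), evalE E V a)
        - ∑ b ∈ Finset.univ.filter
          (fun b => (biGraph (T \ {q})).Reachable (Sum.inr q.2) (Sum.inr b)), evalV E V b)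
        (rootPt E V p) = if p = q then (-1 : ℝ) else 0 := by
    intro q hqD p hpT
    have hqTA : q ∈ T \ A := by rwa [hD, Set.Finite.mem_toFinset] at hqD
    rw [LinearMap.sub_apply]
    simp only [sumE_rootPt, sumV_rootPt, Finset.mem_filter, Finset.mem_univ, true_and]
    by_cases hpq : p = q
    · subst hpq
      rw [if_pos rfl]
      have h1 : ¬ (biGraph (T \ {p})).Reachable (Sum.inr p.2) (Sum.inl p.1) :=
        fun h => not_reachable_of_acyclic hac hqTA.1 h.symm
      have h2 : (biGraph (T \ {p})).Reachable (Sum.inr p.2) (Sum.inr p.2) :=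
        SimpleGraph.Reachable.refl _
      rw [if_neg h1, if_pos h2]
      norm_num
    · rw [if_neg hpq]
      have hadj : (biGraph (T \ {q})).Adj (Sum.inl p.1) (Sum.inr p.2) :=
        (biGraph_adj_inl_inr (T \ {q}) p.1 p.2).mpr ⟨hpT, hpq⟩
      have hiff : (biGraph (T \ {q})).Reachable (Sum.inr q.2) (Sum.inl p.1) ↔
          (biGraph (T \ {q})).Reachable (Sum.inr q.2) (Sum.inr p.2) :=
        ⟨fun h => h.trans hadj.reachable, fun h => h.trans hadj.reachable.symm⟩
      by_cases h : (biGraph (T \ {q})).Reachable (Sum.inr q.2) (Sum.inl p.1)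
      · rw [if_pos h, if_pos (hiff.mp h)]
        ring
      · rw [if_neg h, if_neg (fun h' => h (hiff.mpr h'))]
        ring
  have hroot : ∀ p ∈ T, ℓ (rootPt E V p) = if p ∈ D then (-1 : ℝ) else 0 := by
    intro p hpT
    rw [hℓ, LinearMap.sum_apply, Finset.sum_congr rfl (fun q hq => hterm q hq p hpT),
      Finset.sum_ite_eq D p (fun _ => (-1 : ℝ))]
  have hs : ∀ z ∈ rootPt E V '' T, ℓ z ≤ 0 := by
    rintro z ⟨p, hp, rfl⟩
    rw [hroot p hp]
    split_ifs <;> norm_num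
  have hA0 : ∀ p ∈ A, ℓ (rootPt E V p) = 0 := by
    intro p hp
    rw [hroot p (hA hp), if_neg]
    rw [hD, Set.Finite.mem_toFinset]
    exact fun hc => hc.2 hp
  have hTA : ∀ p ∈ T, ℓ (rootPt E V p) = 0 → p ∈ A := by
    intro p hp h0
    rw [hroot p hp] at h0
    by_contra hcon
    rw [if_pos (by rw [hD, Set.Finite.mem_toFinset]; exact ⟨hp, hcon⟩)] at h0
    norm_num at h0
  have hface := face_extreme (rootPt E V '' T) ℓ 0 hs
  have heq : {x ∈ convexHull ℝ (rootPt E V '' T) | ℓ x = 0}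
      = convexHull ℝ (rootPt E V '' A) := by
    apply Set.Subset.antisymm
    · rintro x ⟨hxh, hx0⟩
      refine convexHull_mono ?_ (face_eq _ ℓ 0 hs x hxh hx0)
      rintro z ⟨⟨p, hp, rfl⟩, hz0⟩
      exact ⟨p, hTA p hp hz0, rfl⟩
    · intro x hx
      refine ⟨convexHull_mono (Set.image_mono hA) hx, ?_⟩
      have hsub : convexHull ℝ (rootPt E V '' A) ⊆ {z | ℓ z = 0} :=
        convexHull_min (by rintro z ⟨p, hp, rfl⟩; exact hA0 p hp)
          (convex_hyperplane ℓ.isLinear 0)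
      exact hsub hx
  rwa [heq] at hface

/-- Forward direction: if the intersection of the two simplices is extreme in
the first one, it equals the simplex on the common points. -/
lemma inter_eq_of_extreme (T T' : Set (E × V))
    (hExt : IsExtreme ℝ (convexHull ℝ (rootPt E V '' T))
      (convexHull ℝ (rootPt E V '' T) ∩ convexHull ℝ (rootPt E V '' T'))) :
    convexHull ℝ (rootPt E V '' T) ∩ convexHull ℝ (rootPt E V '' T') =
      convexHull ℝ (rootPt E V '' (T ∩ T')) := by
  apply Set.Subset.antisymm
  · intro x hx
    have hxT := hx.1
    rw [convexHull_eq] at hxT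
    obtain ⟨ι, t, w, z, hw0, hw1, hzs, hcm⟩ := hxT
    rw [Finset.centerMass_eq_of_sum_1 _ _ hw1] at hcm
    have hclaim : ∀ i ∈ t, w i ≠ 0 →
        z i ∈ convexHull ℝ (rootPt E V '' T) ∩ convexHull ℝ (rootPt E V '' T') := by
      intro i0 hi0 hwi0
      have hwpos : 0 < w i0 := lt_of_le_of_ne (hw0 i0 hi0) (Ne.symm hwi0)
      set r : ℝ := ∑ i ∈ t.erase i0, w i with hr
      have hrw : w i0 + r = 1 := by
        rw [hr, Finset.add_sum_erase t w hi0]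
        exact hw1
      have hr0 : 0 ≤ r :=
        Finset.sum_nonneg (fun i hi => hw0 i (Finset.mem_erase.mp hi).2)
      rcases eq_or_lt_of_le hr0 with hr00 | hrpos
      · -- all the weight is on `i0`, so `x = z i0`
        have hzero : ∑ i ∈ t.erase i0, w i • z i = 0 := by
          apply Finset.sum_eq_zero
          intro i hi
          have h2 : w i ≤ r :=
            Finset.single_le_sum (fun j hj => hw0 j (Finset.mem_erase.mp hj).2) hi
          have h1 := hw0 i (Finset.mem_erase.mp hi).2
          have : w i = 0 := le_antisymm (by rw [← hr00] at h2; exact h2) h1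
          rw [this, zero_smul]
        have hw1' : w i0 = 1 := by
          have : r = 0 := hr00.symm
          linarith
        have hxz : x = z i0 := by
          rw [← hcm, ← Finset.add_sum_erase t (fun i => w i • z i) hi0, hzero, add_zero,
            hw1', one_smul]
        rw [← hxz]
        exact hx
      · set y := (t.erase i0).centerMass w z with hy
        have hyT : y ∈ convexHull ℝ (rootPt E V '' T) :=
          Finset.centerMass_mem_convexHull _
            (fun i hi => hw0 i (Finset.mem_erase.mp hi).2) hrpos
            (fun i hi => hzs i (Finset.mem_erase.mp hi).2)
        have hzT : z i0 ∈ convexHull ℝ (rootPt E V '' T) :=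
          subset_convexHull ℝ _ (hzs i0 hi0)
        have hseg : x ∈ openSegment ℝ (z i0) y := by
          refine ⟨w i0, r, hwpos, hrpos, hrw, ?_⟩
          rw [hy, Finset.centerMass, ← hr, smul_smul, mul_inv_cancel₀ (ne_of_gt hrpos),
            one_smul, Finset.add_sum_erase t (fun i => w i • z i) hi0, hcm]
        exact hExt.2 hzT hyT hx hseg
    have hw1' : ∑ i ∈ t.filter (fun i => w i ≠ 0), w i = 1 := by
      rw [Finset.sum_filter_ne_zero]; exact hw1
    have hx' : (t.filter (fun i => w i ≠ 0)).centerMass w z = x := by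
      rw [Finset.centerMass_eq_of_sum_1 _ _ hw1', ← hcm]
      exact Finset.sum_filter_of_ne (fun i _ h hw => h (by rw [hw, zero_smul]))
    rw [← hx']
    apply Finset.centerMass_mem_convexHull
    · exact fun i hi => hw0 i (Finset.mem_filter.mp hi).1
    · rw [hw1']; norm_num
    · intro i hi
      obtain ⟨hit, hwn⟩ := Finset.mem_filter.mp hi
      obtain ⟨p, hp, hpz⟩ := hzs i hit
      have hzT' : z i ∈ convexHull ℝ (rootPt E V '' T') := (hclaim i hit hwn).2
      rw [← hpz] at hzT'
      have hpT' : p ∈ T' := rootPt_mem_hull hzT'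
      exact ⟨p, ⟨hp, hpT'⟩, hpz⟩
  · exact Set.subset_inter
      (convexHull_mono (Set.image_mono Set.inter_subset_left))
      (convexHull_mono (Set.image_mono Set.inter_subset_right))

end RootPt

/-- For spanning trees `T`, `T'` of a connected bipartite
graph `G`, the maximal simplices `σ_T = conv{𝐞 + 𝐯 : ev ∈ T}` and `σ_{T'}`
intersect in a common face (face = extreme subset) if and only if their
intersection is exactly the simplex spanned by the common edges, i.e.
`conv{𝐞 + 𝐯 : ev ∈ T ∩ T'}`. -/
theorem simplices_common_face_iff {E V : Type} [Fintype E] [Fintype V]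
    (edges : Set (E × V)) (hconn : (biGraph edges).Connected)
    (T T' : Set (E × V)) (hT : T ⊆ edges) (hT' : T' ⊆ edges)
    (htree : (biGraph T).IsTree) (htree' : (biGraph T').IsTree) :
    (IsExtreme ℝ (convexHull ℝ (rootPt E V '' T))
        (convexHull ℝ (rootPt E V '' T) ∩ convexHull ℝ (rootPt E V '' T')) ∧
      IsExtreme ℝ (convexHull ℝ (rootPt E V '' T'))
        (convexHull ℝ (rootPt E V '' T) ∩ convexHull ℝ (rootPt E V '' T'))) ↔
      convexHull ℝ (rootPt E V '' T) ∩ convexHull ℝ (rootPt E V '' T') =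
        convexHull ℝ (rootPt E V '' (T ∩ T')) := by
  constructor
  · rintro ⟨h1, -⟩
    exact inter_eq_of_extreme T T' h1
  · intro hF
    constructor
    · rw [hF]
      exact extreme_hull_subset T (T ∩ T') Set.inter_subset_left htree.2
    · rw [hF]
      exact extreme_hull_subset T' (T ∩ T') Set.inter_subset_right htree'.2
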